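/- arXiv:2011.02428 — 3 statements merged into one kernel-verified Lean document; each statement's English description precedes it below -/
import Mathlib

section
/- Let N ≥ 1 and M ≥ 0 be integers, let G be a simple (undirected, loopless) graph on the vertex set [N], and let w assign to every edge {u,v} of G an integer weight w(u,v) = w(v,u) with −M ≤ w(u,v) ≤ M. Define, for (i,j,k) ∈ [N]³, T(i,j,k) = (N+1)⁴·(w(i,j)+w(i,k)+w(k,j)) + (N+1)²·i + (N+1)·j + k if {i,j}, {i,k} and {k,j} are all edges of G, and T(i,j,k) = (N+1)⁴·(3M+1) + (N+1)²·i + (N+1)·j + k otherwise. Then G contains a triangle (three pairwise adjacent vertices) if and only if the minimum of T over [N]³ is strictly less than (N+1)⁴·(3M+1). -/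
/-- Let `G` be a simple graph on the vertex set `[N] = {1,…,N}`
(its adjacent vertices all lie in `[N]`), with symmetric integer edge weights
`w` satisfying `−M ≤ w(u,v) ≤ M` on every edge. With the virtual table
`T(i,j,k) = (N+1)⁴·(w(i,j)+w(i,k)+w(k,j)) + (N+1)²·i + (N+1)·j + k` when
`{i,j}, {i,k}, {k,j}` are all edges of `G`, and
`T(i,j,k) = (N+1)⁴·(3M+1) + (N+1)²·i + (N+1)·j + k` otherwise, the graph `G`
contains a triangle iff the minimum of `T` over `[N]³` is `< (N+1)⁴·(3M+1)`. -/
theorem triangle_iff_table_min_below_sentinel (N : ℕ) (hN : 1 ≤ N) (M : ℤ) (hM : 0 ≤ M)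
    (G : SimpleGraph ℕ) [DecidableRel G.Adj]
    (hvert : ∀ u v, G.Adj u v → u ∈ Finset.Icc 1 N ∧ v ∈ Finset.Icc 1 N)
    (w : ℕ → ℕ → ℤ)
    (hsym : ∀ u v, G.Adj u v → w u v = w v u)
    (hbound : ∀ u v, G.Adj u v → -M ≤ w u v ∧ w u v ≤ M)
    (T : ℕ → ℕ → ℕ → ℤ)
    (hT : ∀ i j k, T i j k =
      if G.Adj i j ∧ G.Adj i k ∧ G.Adj k j then
        ((N : ℤ) + 1) ^ 4 * (w i j + w i k + w k j)
          + ((N : ℤ) + 1) ^ 2 * (i : ℤ) + ((N : ℤ) + 1) * (j : ℤ) + (k : ℤ)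
      else
        ((N : ℤ) + 1) ^ 4 * (3 * M + 1)
          + ((N : ℤ) + 1) ^ 2 * (i : ℤ) + ((N : ℤ) + 1) * (j : ℤ) + (k : ℤ)) :
    (∃ i j k, G.Adj i j ∧ G.Adj i k ∧ G.Adj k j) ↔
      (∃ i ∈ Finset.Icc 1 N, ∃ j ∈ Finset.Icc 1 N, ∃ k ∈ Finset.Icc 1 N,
        T i j k < ((N : ℤ) + 1) ^ 4 * (3 * M + 1)) := by

  constructor
  · rintro ⟨i, j, k, hij, hik, hkj⟩
    obtain ⟨hi, hj⟩ := hvert i j hij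
    obtain ⟨hk, _⟩ := hvert k j hkj
    refine ⟨i, hi, j, hj, k, hk, ?_⟩
    rw [hT i j k, if_pos ⟨hij, hik, hkj⟩]
    have hiN : (i : ℤ) ≤ N := by exact_mod_cast (Finset.mem_Icc.mp hi).2
    have hjN : (j : ℤ) ≤ N := by exact_mod_cast (Finset.mem_Icc.mp hj).2
    have hkN : (k : ℤ) ≤ N := by exact_mod_cast (Finset.mem_Icc.mp hk).2
    have hS : w i j + w i k + w k j ≤ 3 * M := by
      have h1 := (hbound i j hij).2
      have h2 := (hbound i k hik).2
      have h3 := (hbound k j hkj).2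
      linarith
    have hA : (2 : ℤ) ≤ (N : ℤ) + 1 := by
      have : (1 : ℤ) ≤ N := by exact_mod_cast hN
      linarith
    set A : ℤ := (N : ℤ) + 1 with hAdef
    have hA4 : (0 : ℤ) ≤ A ^ 4 := by positivity
    have h1 : A ^ 4 * (w i j + w i k + w k j) ≤ A ^ 4 * (3 * M) :=
      mul_le_mul_of_nonneg_left hS hA4
    have h2 : A ^ 2 * (i : ℤ) ≤ A ^ 2 * (A - 1) := by
      have : (0 : ℤ) ≤ A ^ 2 := by positivity
      have hi' : (i : ℤ) ≤ A - 1 := by omega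
      exact mul_le_mul_of_nonneg_left hi' this
    have h3 : A * (j : ℤ) ≤ A * (A - 1) := by
      have hj' : (j : ℤ) ≤ A - 1 := by omega
      exact mul_le_mul_of_nonneg_left hj' (by linarith)
    have h4 : (k : ℤ) ≤ A - 1 := by omega
    have h5 : A ^ 3 ≤ A ^ 4 := pow_le_pow_right₀ (by linarith) (by norm_num)
    nlinarith [h1, h2, h3, h4, h5]
  · rintro ⟨i, hi, j, hj, k, hk, hlt⟩
    rw [hT i j k] at hlt
    by_cases h : G.Adj i j ∧ G.Adj i k ∧ G.Adj k j
    · exact ⟨i, j, k, h⟩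
    · rw [if_neg h] at hlt
      exfalso
      have hi0 : (0 : ℤ) ≤ i := Int.ofNat_nonneg i
      have hj0 : (0 : ℤ) ≤ j := Int.ofNat_nonneg j
      have hk0 : (0 : ℤ) ≤ k := Int.ofNat_nonneg k
      have hA : (0 : ℤ) ≤ (N : ℤ) + 1 := by positivity
      nlinarith [pow_nonneg hA 2, mul_nonneg (pow_nonneg hA 2) hi0, mul_nonneg hA hj0]
end

section
/- Let N ≥ 1 and M ≥ 0 be integers, let G be a simple (undirected, loopless) graph on the vertex set [N], and let w assign to every edge {u,v} of G an integer weight w(u,v) = w(v,u) with −M ≤ w(u,v) ≤ M. Define, for (i,j,k) ∈ [N]³, T(i,j,k) = (N+1)⁴·(w(i,j)+w(i,k)+w(k,j)) + (N+1)²·i + (N+1)·j + k if {i,j}, {i,k} and {k,j} are all edges of G, and T(i,j,k) = (N+1)⁴·(3M+1) + (N+1)²·i + (N+1)·j + k otherwise. If (i',j',k') minimizes T over [N]³ and T(i',j',k') < (N+1)⁴·(3M+1), then i', j', k' are pairwise adjacent in G (so they form a triangle) and the weight w(i',j')+w(i',k')+w(k',j') of this triangle is minimum among the weights of all triangles of G.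 -/
/-- correctness of Algorithm Q: with the setup of the minimum
weight triangle virtual table, if `(i',j',k') ∈ [N]³` minimizes `T` over `[N]³`
and `T(i',j',k') < (N+1)⁴·(3M+1)`, then `i', j', k'` are pairwise adjacent in
`G` (they form a triangle) and the weight `w(i',j')+w(i',k')+w(k',j')` of this
triangle is minimum among the weights of all triangles of `G`. -/
theorem table_minimizer_gives_min_weight_triangle (N : ℕ) (hN : 1 ≤ N) (M : ℤ) (hM : 0 ≤ M)
    (G : SimpleGraph ℕ) [DecidableRel G.Adj]
    (hvert : ∀ u v, G.Adj u v → u ∈ Finset.Icc 1 N ∧ v ∈ Finset.Icc 1 N)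
    (w : ℕ → ℕ → ℤ)
    (hsym : ∀ u v, G.Adj u v → w u v = w v u)
    (hbound : ∀ u v, G.Adj u v → -M ≤ w u v ∧ w u v ≤ M)
    (T : ℕ → ℕ → ℕ → ℤ)
    (hT : ∀ i j k, T i j k =
      if G.Adj i j ∧ G.Adj i k ∧ G.Adj k j then
        ((N : ℤ) + 1) ^ 4 * (w i j + w i k + w k j)
          + ((N : ℤ) + 1) ^ 2 * (i : ℤ) + ((N : ℤ) + 1) * (j : ℤ) + (k : ℤ)
      else
        ((N : ℤ) + 1) ^ 4 * (3 * M + 1)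
          + ((N : ℤ) + 1) ^ 2 * (i : ℤ) + ((N : ℤ) + 1) * (j : ℤ) + (k : ℤ))
    (i' j' k' : ℕ)
    (hi' : i' ∈ Finset.Icc 1 N) (hj' : j' ∈ Finset.Icc 1 N) (hk' : k' ∈ Finset.Icc 1 N)
    (hmin : ∀ i ∈ Finset.Icc 1 N, ∀ j ∈ Finset.Icc 1 N, ∀ k ∈ Finset.Icc 1 N,
      T i' j' k' ≤ T i j k)
    (hbelow : T i' j' k' < ((N : ℤ) + 1) ^ 4 * (3 * M + 1)) :
    (G.Adj i' j' ∧ G.Adj i' k' ∧ G.Adj k' j') ∧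
      (∀ i j k, G.Adj i j → G.Adj i k → G.Adj k j →
        w i' j' + w i' k' + w k' j' ≤ w i j + w i k + w k j) := by
  have hadj : G.Adj i' j' ∧ G.Adj i' k' ∧ G.Adj k' j' := by
    by_contra h
    rw [hT, if_neg h] at hbelow
    have h1 : (0:ℤ) ≤ ((N : ℤ) + 1) ^ 2 * (i' : ℤ) := by positivity
    have h2 : (0:ℤ) ≤ ((N : ℤ) + 1) * (j' : ℤ) := by positivity
    have h3 : (0:ℤ) ≤ (k' : ℤ) := by positivity
    linarith
  refine ⟨hadj, ?_⟩
  intro i j k hij hik hkj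
  have hiN : i ∈ Finset.Icc 1 N := (hvert i j hij).1
  have hjN : j ∈ Finset.Icc 1 N := (hvert i j hij).2
  have hkN : k ∈ Finset.Icc 1 N := (hvert i k hik).2
  have hle := hmin i hiN j hjN k hkN
  rw [hT, hT, if_pos hadj, if_pos ⟨hij, hik, hkj⟩] at hle
  -- cast bounds
  have hiu : (i : ℤ) ≤ N := Int.ofNat_le.mpr (Finset.mem_Icc.mp hiN).2
  have hju : (j : ℤ) ≤ N := Int.ofNat_le.mpr (Finset.mem_Icc.mp hjN).2
  have hku : (k : ℤ) ≤ N := Int.ofNat_le.mpr (Finset.mem_Icc.mp hkN).2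
  have hi0 : (0:ℤ) ≤ (i' : ℤ) := Int.ofNat_nonneg _
  have hj0 : (0:ℤ) ≤ (j' : ℤ) := Int.ofNat_nonneg _
  have hk0 : (0:ℤ) ≤ (k' : ℤ) := Int.ofNat_nonneg _
  have hB : (1:ℤ) ≤ (N : ℤ) := Int.ofNat_le.mpr hN
  by_contra hcon
  push_neg at hcon
  have h1 : w i j + w i k + w k j + 1 ≤ w i' j' + w i' k' + w k' j' := hcon
  have hmul : ((N : ℤ) + 1) ^ 4 * (w i j + w i k + w k j + 1)
      ≤ ((N : ℤ) + 1) ^ 4 * (w i' j' + w i' k' + w k' j') := by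
    apply mul_le_mul_of_nonneg_left h1
    positivity
  nlinarith [sq_nonneg ((N:ℤ)+1), sq_nonneg (((N:ℤ)+1)^2), mul_le_mul_of_nonneg_left hiu (show (0:ℤ) ≤ ((N:ℤ)+1)^2 by positivity), mul_le_mul_of_nonneg_left hju (show (0:ℤ) ≤ ((N:ℤ)+1) by positivity), pow_le_pow_right₀ (show (1:ℤ) ≤ (N:ℤ)+1 by linarith) (show 3 ≤ 4 by norm_num)]
end

section
/- Let N be a positive integer and let K : [N]² → ℤ be a matrix of integers. Define, for (i,j) ∈ [N]², V(i,j) = −(N+1)⁴·(K(i,j)−K(j,i))² + (N+1)²·i + (N+1)·j. Then the minimum of V over [N]² is positive if and only if K is symmetric, i.e., K(i,j) = K(j,i) for all i, j ∈ [N]; equivalently, the minimum of V is negative if and only if K(i,j) ≠ K(j,i) for some i, j ∈ [N]. -/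
/-- For an `N×N` integer matrix `K` and the virtual table
`V(i,j) = −(N+1)⁴·(K(i,j)−K(j,i))² + (N+1)²·i + (N+1)·j`, the minimum of `V`
over `[N]²` is positive (i.e., every value of `V` on `[N]²` is positive) iff
`K` is symmetric on `[N]²`; equivalently, the minimum of `V` is negative
(i.e., some value is negative) iff `K(i,j) ≠ K(j,i)` for some `i, j ∈ [N]`. -/
theorem symmetry_iff_table_min_pos (N : ℕ) (hN : 0 < N)
    (K : ℕ → ℕ → ℤ)
    (V : ℕ → ℕ → ℤ)
    (hV : ∀ i j, V i j =
      -(((N : ℤ) + 1) ^ 4) * (K i j - K j i) ^ 2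
        + ((N : ℤ) + 1) ^ 2 * (i : ℤ) + ((N : ℤ) + 1) * (j : ℤ)) :
    ((∀ i ∈ Finset.Icc 1 N, ∀ j ∈ Finset.Icc 1 N, 0 < V i j) ↔
        (∀ i ∈ Finset.Icc 1 N, ∀ j ∈ Finset.Icc 1 N, K i j = K j i)) ∧
      ((∃ i ∈ Finset.Icc 1 N, ∃ j ∈ Finset.Icc 1 N, V i j < 0) ↔
        (∃ i ∈ Finset.Icc 1 N, ∃ j ∈ Finset.Icc 1 N, K i j ≠ K j i)) := by
  have hM : (2 : ℤ) ≤ (N : ℤ) + 1 := by exact_mod_cast Nat.succ_le_succ hN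
  have key : ∀ i ∈ Finset.Icc 1 N, ∀ j ∈ Finset.Icc 1 N,
      (0 < V i j ↔ K i j = K j i) := by
    intro i hi j hj
    simp only [Finset.mem_Icc] at hi hj
    have hi1 : (1 : ℤ) ≤ i := by exact_mod_cast hi.1
    have hi2 : (i : ℤ) ≤ N := by exact_mod_cast hi.2
    have hj1 : (1 : ℤ) ≤ j := by exact_mod_cast hj.1
    have hj2 : (j : ℤ) ≤ N := by exact_mod_cast hj.2
    rw [hV]
    constructor
    · intro hpos
      by_contra hne
      have hsq : 1 ≤ (K i j - K j i) ^ 2 := by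
        rcases lt_or_gt_of_ne (sub_ne_zero_of_ne hne) with h | h <;> nlinarith
      have hN1 : (1 : ℤ) ≤ N := by exact_mod_cast hN
      have hlt : ((N:ℤ)+1)^2*(i:ℤ) + ((N:ℤ)+1)*(j:ℤ) < ((N:ℤ)+1)^4 := by
        have hN0 : (0:ℤ) ≤ N := by linarith
        have h1 : ((N:ℤ)+1)^2*(i:ℤ) ≤ ((N:ℤ)+1)^2*(N:ℤ) :=
          mul_le_mul_of_nonneg_left hi2 (by positivity)
        have h2 : ((N:ℤ)+1)*(j:ℤ) ≤ ((N:ℤ)+1)*(N:ℤ) :=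
          mul_le_mul_of_nonneg_left hj2 (by positivity)
        nlinarith [pow_nonneg hN0 4, pow_nonneg hN0 3, pow_nonneg hN0 2]
      have hge : ((N:ℤ)+1)^4 ≤ ((N:ℤ)+1)^4 * (K i j - K j i)^2 :=
        le_mul_of_one_le_right (by positivity) hsq
      linarith
    · intro heq
      rw [heq, sub_self]
      nlinarith
  constructor
  · constructor
    · intro h i hi j hj; exact (key i hi j hj).mp (h i hi j hj)
    · intro h i hi j hj; exact (key i hi j hj).mpr (h i hi j hj)
  · constructor
    · rintro ⟨i, hi, j, hj, hneg⟩
      exact ⟨i, hi, j, hj, fun heq => absurd ((key i hi j hj).mpr heq) (by omega)⟩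
    · rintro ⟨i, hi, j, hj, hne⟩
      refine ⟨i, hi, j, hj, ?_⟩
      by_contra hle
      push_neg at hle
      -- V i j ≥ 0; but V i j ≤ 0 impossible... need V i j ≠ 0 then 0 < V implies K eq
      have hVne : V i j ≠ 0 := by
        rw [hV]
        intro h0
        apply hne
        by_contra hne2
        have hsq : 1 ≤ (K i j - K j i) ^ 2 := by
          rcases lt_or_gt_of_ne (sub_ne_zero_of_ne hne2) with h | h <;> nlinarith
        simp only [Finset.mem_Icc] at hi hj
        have hi2 : (i : ℤ) ≤ N := by exact_mod_cast hi.2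
        have hj2 : (j : ℤ) ≤ N := by exact_mod_cast hj.2
        have hN1 : (1 : ℤ) ≤ N := by exact_mod_cast hN
        have hlt : ((N:ℤ)+1)^2*(i:ℤ) + ((N:ℤ)+1)*(j:ℤ) < ((N:ℤ)+1)^4 := by
          have hN0 : (0:ℤ) ≤ N := by linarith
          have h1 : ((N:ℤ)+1)^2*(i:ℤ) ≤ ((N:ℤ)+1)^2*(N:ℤ) :=
            mul_le_mul_of_nonneg_left hi2 (by positivity)
          have h2 : ((N:ℤ)+1)*(j:ℤ) ≤ ((N:ℤ)+1)*(N:ℤ) :=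
            mul_le_mul_of_nonneg_left hj2 (by positivity)
          nlinarith [pow_nonneg hN0 4, pow_nonneg hN0 3, pow_nonneg hN0 2]
        have hge : ((N:ℤ)+1)^4 ≤ ((N:ℤ)+1)^4 * (K i j - K j i)^2 :=
          le_mul_of_one_le_right (by positivity) hsq
        linarith
      exact hne ((key i hi j hj).mp (by omega))
end
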